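/- Let ρ : ℝ → ℝ be a nonnegative integrable function supported on a closed bounded interval [m, M] with ρ bounded between ρ_min > 0 and ρ_max < ∞ on [m, M], and let r > 0. Define the flow map γ(x) = (∫_{I(x)} z ρ(z) dz) / (∫_{I(x)} ρ(z) dz) where I(x) = [x−r, x+r] ∩ [m, M]. Then for all x, y ∈ [m, M] with x < y, we have γ(x) < γ(y). -/

import Mathlib

open MeasureTheory Set

lemma Jadd' {f : ℝ → ℝ} {s t u : ℝ} (h1 : s ≤ t) (h2 : t ≤ u)
    (hf : IntegrableOn f (Icc s u)) :
    ∫ z in Icc s u, f z = (∫ z in Icc s t, f z) + ∫ z in Icc t u, f z := by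
  rw [integral_Icc_eq_integral_Ioc, integral_Icc_eq_integral_Ioc, integral_Icc_eq_integral_Ioc,
    ← Ioc_union_Ioc_eq_Ioc h1 h2]
  exact setIntegral_union (Ioc_disjoint_Ioc_of_le le_rfl) measurableSet_Ioc
    (hf.mono_set (fun z hz => ⟨hz.1.le, hz.2.trans h2⟩))
    (hf.mono_set (fun z hz => ⟨h1.trans hz.1.le, hz.2⟩))

lemma Jnonneg' {ρ : ℝ → ℝ} (hρ0 : ∀ x, 0 ≤ ρ x) (s t : ℝ) :
    0 ≤ ∫ z in Icc s t, ρ z :=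
  setIntegral_nonneg measurableSet_Icc (fun z _ => hρ0 z)

lemma Jpos' {ρ : ℝ → ℝ} {ρmin s t : ℝ} (hρmin : 0 < ρmin)
    (hint : IntegrableOn ρ (Icc s t))
    (hlb : ∀ z ∈ Icc s t, ρmin ≤ ρ z) (hst : s < t) :
    0 < ∫ z in Icc s t, ρ z := by
  have h1 : ∫ z in Icc s t, ρmin ≤ ∫ z in Icc s t, ρ z :=
    setIntegral_mono_on ((integrableOn_const_iff).2 (Or.inr (by simp [Real.volume_Icc]))) hint
      measurableSet_Icc hlb
  have h2 : ∫ (_ : ℝ) in Icc s t, ρmin = (t - s) * ρmin := by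
    rw [setIntegral_const, Real.volume_real_Icc_of_le (by linarith), smul_eq_mul]
  calc 0 < (t - s) * ρmin := by have := hst; nlinarith
    _ ≤ _ := h2 ▸ h1

lemma Kint' {ρ : ℝ → ℝ} {s t : ℝ} (hint : IntegrableOn ρ (Icc s t)) :
    IntegrableOn (fun z => z * ρ z) (Icc s t) :=
  hint.continuousOn_mul continuousOn_id isCompact_Icc

lemma Kle' {ρ : ℝ → ℝ} {s t : ℝ} (hρ0 : ∀ x, 0 ≤ ρ x)
    (hint : IntegrableOn ρ (Icc s t)) :
    ∫ z in Icc s t, z * ρ z ≤ t * ∫ z in Icc s t, ρ z := by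
  rw [← integral_const_mul]
  exact setIntegral_mono_on (Kint' hint) (hint.continuousOn_mul continuousOn_const isCompact_Icc)
    measurableSet_Icc (fun z hz => mul_le_mul_of_nonneg_right hz.2 (hρ0 z))

lemma Kge' {ρ : ℝ → ℝ} {s t : ℝ} (hρ0 : ∀ x, 0 ≤ ρ x)
    (hint : IntegrableOn ρ (Icc s t)) :
    s * (∫ z in Icc s t, ρ z) ≤ ∫ z in Icc s t, z * ρ z := by
  rw [← integral_const_mul]
  exact setIntegral_mono_on (hint.continuousOn_mul continuousOn_const isCompact_Icc) (Kint' hint)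
    measurableSet_Icc (fun z hz => mul_le_mul_of_nonneg_right hz.1 (hρ0 z))

lemma Klt' {ρ : ℝ → ℝ} {ρmin s t : ℝ} (hρmin : 0 < ρmin) (hρ0 : ∀ x, 0 ≤ ρ x)
    (hint : IntegrableOn ρ (Icc s t))
    (hlb : ∀ z ∈ Icc s t, ρmin ≤ ρ z) (hst : s < t) :
    ∫ z in Icc s t, z * ρ z < t * ∫ z in Icc s t, ρ z := by
  set u := (s + t) / 2 with hu
  have hsu : s < u := by rw [hu]; linarith
  have hut : u < t := by rw [hu]; linarith
  have hintf : IntegrableOn (fun z => (t - z) * ρ z) (Icc s t) :=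
    hint.continuousOn_mul (by fun_prop) isCompact_Icc
  have key : 0 < ∫ z in Icc s t, (t - z) * ρ z := by
    have h1 : ∫ z in Icc s u, (t - u) * ρmin ≤ ∫ z in Icc s u, (t - z) * ρ z := by
      refine setIntegral_mono_on ((integrableOn_const_iff).2 (Or.inr (by simp [Real.volume_Icc])))
        (hintf.mono_set (Icc_subset_Icc_right hut.le)) measurableSet_Icc (fun z hz => ?_)
      have := hlb z ⟨hz.1, hz.2.trans hut.le⟩
      have : ρmin ≤ ρ z := this
      nlinarith [hz.2]
    have h2 : ∫ (_ : ℝ) in Icc s u, (t - u) * ρmin = (u - s) * ((t - u) * ρmin) := by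
      rw [setIntegral_const, Real.volume_real_Icc_of_le (by linarith), smul_eq_mul]
    have h3 : ∫ z in Icc s u, (t - z) * ρ z ≤ ∫ z in Icc s t, (t - z) * ρ z := by
      refine setIntegral_mono_set hintf ?_ (HasSubset.Subset.eventuallyLE (Icc_subset_Icc_right hut.le))
      filter_upwards [ae_restrict_mem measurableSet_Icc] with z hz
      exact mul_nonneg (by linarith [hz.2]) (hρ0 z)
    have hp : 0 < (u - s) * ((t - u) * ρmin) :=
      mul_pos (by linarith) (mul_pos (by linarith) hρmin)
    linarith [h2 ▸ h1]
  have hsub : ∫ z in Icc s t, (t - z) * ρ z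
      = t * (∫ z in Icc s t, ρ z) - ∫ z in Icc s t, z * ρ z := by
    rw [← integral_const_mul, ← integral_sub (hint.continuousOn_mul continuousOn_const isCompact_Icc) (Kint' hint)]
    congr 1; ext z; ring
  linarith [hsub ▸ key]

lemma Kgt' {ρ : ℝ → ℝ} {ρmin s t : ℝ} (hρmin : 0 < ρmin) (hρ0 : ∀ x, 0 ≤ ρ x)
    (hint : IntegrableOn ρ (Icc s t))
    (hlb : ∀ z ∈ Icc s t, ρmin ≤ ρ z) (hst : s < t) :
    s * (∫ z in Icc s t, ρ z) < ∫ z in Icc s t, z * ρ z := by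
  set u := (s + t) / 2 with hu
  have hsu : s < u := by rw [hu]; linarith
  have hut : u < t := by rw [hu]; linarith
  have hintf : IntegrableOn (fun z => (z - s) * ρ z) (Icc s t) :=
    hint.continuousOn_mul (by fun_prop) isCompact_Icc
  have key : 0 < ∫ z in Icc s t, (z - s) * ρ z := by
    have h1 : ∫ z in Icc u t, (u - s) * ρmin ≤ ∫ z in Icc u t, (z - s) * ρ z := by
      refine setIntegral_mono_on ((integrableOn_const_iff).2 (Or.inr (by simp [Real.volume_Icc])))
        (hintf.mono_set (Icc_subset_Icc_left hsu.le)) measurableSet_Icc (fun z hz => ?_)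
      have : ρmin ≤ ρ z := hlb z ⟨hsu.le.trans hz.1, hz.2⟩
      nlinarith [hz.1]
    have h2 : ∫ (_ : ℝ) in Icc u t, (u - s) * ρmin = (t - u) * ((u - s) * ρmin) := by
      rw [setIntegral_const, Real.volume_real_Icc_of_le (by linarith), smul_eq_mul]
    have h3 : ∫ z in Icc u t, (z - s) * ρ z ≤ ∫ z in Icc s t, (z - s) * ρ z := by
      refine setIntegral_mono_set hintf ?_ (HasSubset.Subset.eventuallyLE (Icc_subset_Icc_left hsu.le))
      filter_upwards [ae_restrict_mem measurableSet_Icc] with z hz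
      exact mul_nonneg (by linarith [hz.1]) (hρ0 z)
    have hp : 0 < (t - u) * ((u - s) * ρmin) :=
      mul_pos (by linarith) (mul_pos (by linarith) hρmin)
    linarith [h2 ▸ h1]
  have hsub : ∫ z in Icc s t, (z - s) * ρ z
      = (∫ z in Icc s t, z * ρ z) - s * ∫ z in Icc s t, ρ z := by
    rw [← integral_const_mul, ← integral_sub (Kint' hint) (hint.continuousOn_mul continuousOn_const isCompact_Icc)]
    congr 1; ext z; ring
  linarith [hsub ▸ key]

lemma weakpair' {ρ : ℝ → ℝ} {s t u v : ℝ} (hρ0 : ∀ x, 0 ≤ ρ x)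
    (h1 : IntegrableOn ρ (Icc s t)) (h2 : IntegrableOn ρ (Icc u v)) (htu : t ≤ u) :
    (∫ z in Icc s t, z * ρ z) * (∫ z in Icc u v, ρ z)
      ≤ (∫ z in Icc u v, z * ρ z) * (∫ z in Icc s t, ρ z) := by
  nlinarith [Kle' hρ0 h1, Kge' hρ0 h2, Jnonneg' hρ0 s t, Jnonneg' hρ0 u v,
    mul_le_mul_of_nonneg_right htu (Jnonneg' hρ0 u v)]

lemma strictpair' {ρ : ℝ → ℝ} {ρmin s t u v : ℝ} (hρmin : 0 < ρmin) (hρ0 : ∀ x, 0 ≤ ρ x)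
    (h1 : IntegrableOn ρ (Icc s t)) (h2 : IntegrableOn ρ (Icc u v))
    (hlb1 : ∀ z ∈ Icc s t, ρmin ≤ ρ z) (hlb2 : ∀ z ∈ Icc u v, ρmin ≤ ρ z)
    (hst : s < t) (htu : t ≤ u) (huv : u < v) :
    (∫ z in Icc s t, z * ρ z) * (∫ z in Icc u v, ρ z)
      < (∫ z in Icc u v, z * ρ z) * (∫ z in Icc s t, ρ z) := by
  nlinarith [Klt' hρmin hρ0 h1 hlb1 hst, Kge' hρ0 h2, Jpos' hρmin h1 hlb1 hst,
    Jpos' hρmin h2 hlb2 huv, mul_le_mul_of_nonneg_right htu (Jpos' hρmin h2 hlb2 huv).le]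

lemma alg1 {KL KC KR JL JC JR : ℝ} (W2 : KL*JR ≤ KR*JL) (W3 : KC*JR ≤ KR*JC)
    (S1 : KL*JC < KC*JL) : (KL+KC)*(JC+JR) < (KC+KR)*(JL+JC) := by nlinarith

lemma alg2 {KL KC KR JL JC JR : ℝ} (W1 : KL*JC ≤ KC*JL) (W3 : KC*JR ≤ KR*JC)
    (S2 : KL*JR < KR*JL) : (KL+KC)*(JC+JR) < (KC+KR)*(JL+JC) := by nlinarith

lemma alg3 {KL KC KR JL JC JR : ℝ} (W1 : KL*JC ≤ KC*JL) (W2 : KL*JR ≤ KR*JL)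
    (S3 : KC*JR < KR*JC) : (KL+KC)*(JC+JR) < (KC+KR)*(JL+JC) := by nlinarith

theorem stmt_6 (m M r ρmin ρmax : ℝ) (ρ : ℝ → ℝ)
    (hr : 0 < r) (hMm : M - m > 2 * r)
    (hρ0 : ∀ x, 0 ≤ ρ x) (hsupp : ∀ x, x ∉ Set.Icc m M → ρ x = 0)
    (hint : IntegrableOn ρ (Set.Icc m M))
    (hρmin : 0 < ρmin) (hρmax : ρmin ≤ ρmax)
    (hbd : ∀ x ∈ Set.Icc m M, ρmin ≤ ρ x ∧ ρ x ≤ ρmax)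
    (γ : ℝ → ℝ)
    (hγ : ∀ x, γ x = (∫ z in Set.Icc (x - r) (x + r) ∩ Set.Icc m M, z * ρ z) /
      (∫ z in Set.Icc (x - r) (x + r) ∩ Set.Icc m M, ρ z)) :
    ∀ x ∈ Set.Icc m M, ∀ y ∈ Set.Icc m M, x < y → γ x < γ y := by
  intro x hx y hy hxy
  obtain ⟨hmx, hxM⟩ := hx
  obtain ⟨hmy, hyM⟩ := hy
  set a1 := max (x - r) m with ha1
  set b1 := min (x + r) M with hb1
  set a2 := max (y - r) m with ha2
  set b2 := min (y + r) M with hb2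
  have hma1 : m ≤ a1 := le_max_right _ _
  have hma2 : m ≤ a2 := le_max_right _ _
  have hb1M : b1 ≤ M := min_le_right _ _
  have hb2M : b2 ≤ M := min_le_right _ _
  have ha12 : a1 ≤ a2 := max_le_max (by linarith) le_rfl
  have hb12 : b1 ≤ b2 := min_le_min (by linarith) le_rfl
  have hr1 : a1 + r ≤ b1 := by
    rcases le_total (x - r) m with h | h <;> rcases le_total (x + r) M with h' | h'
    · rw [ha1, hb1, max_eq_right h, min_eq_left h']; linarith
    · rw [ha1, hb1, max_eq_right h, min_eq_right h']; linarith
    · rw [ha1, hb1, max_eq_left h, min_eq_left h']; linarith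
    · rw [ha1, hb1, max_eq_left h, min_eq_right h']; linarith
  have hr2 : a2 + r ≤ b2 := by
    rcases le_total (y - r) m with h | h <;> rcases le_total (y + r) M with h' | h'
    · rw [ha2, hb2, max_eq_right h, min_eq_left h']; linarith
    · rw [ha2, hb2, max_eq_right h, min_eq_right h']; linarith
    · rw [ha2, hb2, max_eq_left h, min_eq_left h']; linarith
    · rw [ha2, hb2, max_eq_left h, min_eq_right h']; linarith
  have ha2M : a2 ≤ M := by linarith
  have hmb1 : m ≤ b1 := by linarith
  have intOn : ∀ p q : ℝ, m ≤ p → q ≤ M → IntegrableOn ρ (Icc p q) :=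
    fun p q hp hq => hint.mono_set (Icc_subset_Icc hp hq)
  have lbOn : ∀ p q : ℝ, m ≤ p → q ≤ M → ∀ z ∈ Icc p q, ρmin ≤ ρ z :=
    fun p q hp hq z hz => (hbd z ⟨hp.trans hz.1, hz.2.trans hq⟩).1
  have int1 : IntegrableOn ρ (Icc a1 b1) := intOn _ _ hma1 hb1M
  have int2 : IntegrableOn ρ (Icc a2 b2) := intOn _ _ hma2 hb2M
  have hJ1 : 0 < ∫ z in Icc a1 b1, ρ z :=
    Jpos' hρmin int1 (lbOn _ _ hma1 hb1M) (by linarith)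
  have hJ2 : 0 < ∫ z in Icc a2 b2, ρ z :=
    Jpos' hρmin int2 (lbOn _ _ hma2 hb2M) (by linarith)
  have hIx : Icc (x - r) (x + r) ∩ Icc m M = Icc a1 b1 := by rw [Set.Icc_inter_Icc]
  have hIy : Icc (y - r) (y + r) ∩ Icc m M = Icc a2 b2 := by rw [Set.Icc_inter_Icc]
  rw [hγ x, hγ y, hIx, hIy, div_lt_div_iff₀ hJ1 hJ2]
  -- goal : K1 * J2 < K2 * J1
  rcases le_or_gt a2 b1 with hab | hab
  · -- overlapping case
    have eJ1 := Jadd' ha12 hab int1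
    have eK1 := Jadd' ha12 hab (Kint' int1)
    have eJ2 := Jadd' hab hb12 int2
    have eK2 := Jadd' hab hb12 (Kint' int2)
    have intL : IntegrableOn ρ (Icc a1 a2) := intOn _ _ hma1 ha2M
    have intC : IntegrableOn ρ (Icc a2 b1) := intOn _ _ hma2 hb1M
    have intR : IntegrableOn ρ (Icc b1 b2) := intOn _ _ hmb1 hb2M
    have W1 := weakpair' hρ0 intL intC (le_refl a2)
    have W2 := weakpair' hρ0 intL intR hab
    have W3 := weakpair' hρ0 intC intR (le_refl b1)
    rw [eJ1, eK1, eJ2, eK2]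
    rcases eq_or_lt_of_le ha12 with h12 | h12
    · -- a1 = a2 : need b1 < b2, strict T3
      have hbb : b1 < b2 := by
        rcases lt_or_ge b1 b2 with h | h
        · exact h
        · exfalso
          have hbe : b1 = b2 := le_antisymm hb12 h
          have h1 : y ≤ m + r := by
            by_contra hy'
            push_neg at hy'
            have : a1 < a2 := lt_of_lt_of_le (max_lt (by linarith) (by linarith))
              (le_max_left (y - r) m)
            linarith [h12 ▸ this]
          have h2 : M ≤ x + r := by
            by_contra hx'
            push_neg at hx'
            have hx2 : b1 < b2 := lt_of_le_of_lt (min_le_left (x + r) M)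
              (lt_min (by linarith) hx')
            linarith [hbe ▸ hx2]
          linarith
      have S3 := strictpair' hρmin hρ0 intC intR (lbOn _ _ hma2 hb1M) (lbOn _ _ hmb1 hb2M)
        (by linarith) (le_refl b1) hbb
      exact alg3 W1 W2 S3
    · rcases eq_or_lt_of_le hb12 with hbe | hbb
      · -- b1 = b2 : a2 < b1, strict T1
        have h2 : M ≤ x + r := by
          by_contra hx'
          push_neg at hx'
          have hx2 : b1 < b2 := lt_of_le_of_lt (min_le_left (x + r) M)
            (lt_min (by linarith) hx')
          linarith [hbe ▸ hx2]
        have hb1e : b1 = M := by rw [hb1, min_eq_right h2]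
        have ha2b1 : a2 < b1 := by
          rw [hb1e]; exact max_lt (by linarith) (by linarith)
        have S1 := strictpair' hρmin hρ0 intL intC (lbOn _ _ hma1 ha2M) (lbOn _ _ hma2 hb1M)
          h12 (le_refl a2) ha2b1
        exact alg1 W2 W3 S1
      · -- a1 < a2, b1 < b2 : strict T2
        have S2 := strictpair' hρmin hρ0 intL intR (lbOn _ _ hma1 ha2M) (lbOn _ _ hmb1 hb2M)
          h12 hab hbb
        exact alg2 W1 W3 S2
  · -- disjoint case
    exact strictpair' hρmin hρ0 int1 int2 (lbOn _ _ hma1 hb1M) (lbOn _ _ hma2 hb2M)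
      (by linarith) hab.le (by linarith)
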